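/- For β > 1, let R = (β−1)/(2 + √(4 + (β−1)²)). Then R ∈ (0,1), R is a root of (1−β) + 4r − (1−β)r² = 0, and for all r ∈ [0, R], 1 + 4r/(1−r²) ≤ β. -/

import Mathlib

open Real Set

theorem F1_Mbeta_radius_computation (β : ℝ) (hβ : 1 < β) :
    let R : ℝ := (β - 1) / (2 + Real.sqrt (4 + (β - 1) ^ 2))
    (0 < R ∧ R < 1) ∧
    (1 - β) + 4 * R - (1 - β) * R ^ 2 = 0 ∧
    (∀ r ∈ Icc (0 : ℝ) R, 1 + 4 * r / (1 - r ^ 2) ≤ β) := by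
  intro R
  have hb : 0 < β - 1 := by linarith
  have h4 : (0:ℝ) ≤ 4 + (β - 1) ^ 2 := by positivity
  have hR : R = (β - 1) / (2 + Real.sqrt (4 + (β - 1) ^ 2)) := rfl
  set s := Real.sqrt (4 + (β - 1) ^ 2) with hsdef
  have hs2 : s ^ 2 = 4 + (β - 1) ^ 2 := Real.sq_sqrt h4
  have hsnn : 0 ≤ s := Real.sqrt_nonneg _
  have hsgt : 2 < s := by nlinarith [sq_nonneg (s - 2)]
  have hden : (0:ℝ) < 2 + s := by linarith
  have hRpos : 0 < R := by rw [hR]; exact div_pos hb hden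
  have hR1 : R < 1 := by
    rw [hR, div_lt_one hden]
    nlinarith [sq_nonneg (s - (β - 1))]
  have hroot : (1 - β) + 4 * R - (1 - β) * R ^ 2 = 0 := by
    rw [hR]
    field_simp
    linear_combination (-(β - 1)) * hs2
  refine ⟨⟨hRpos, hR1⟩, hroot, ?_⟩
  rintro r ⟨hr0, hrR⟩
  have hr1 : r < 1 := lt_of_le_of_lt hrR hR1
  have hpos : 0 < 1 - r ^ 2 := by nlinarith
  have key : (β - 1) * r ^ 2 + 4 * r - (β - 1) ≤ 0 := by
    nlinarith [hroot, mul_le_mul_of_nonneg_left (mul_self_le_mul_self hr0 hrR) hb.le]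
  have h2 : 4 * r / (1 - r ^ 2) ≤ β - 1 := by
    rw [div_le_iff₀ hpos]; nlinarith
  linarith
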